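/- Let U(t) := Φ(t,0) * U₀ * exp(-M t), where Φ(t,0) is the state transition matrix of a T-periodic linear system and Φ(T,0) * U₀ = U₀ * exp(M T). Then U is T-periodic: U(t+T) = U(t) for all t. -/

import Mathlib

open NormedSpace

/-- `U t := Φ t * U₀ * exp (-(t • M))` is `T`-periodic, given the cocycle property
`Φ (t+T) = Φ t * Φ T` and the eigen-relation `Φ T * U₀ = U₀ * exp (T • M)`. -/
theorem stmt_3 {n : ℕ} (T : ℝ) (hT : 0 < T)
    (Φ : ℝ → Matrix (Fin n) (Fin n) ℂ) (U₀ M : Matrix (Fin n) (Fin n) ℂ)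
    (hcocycle : ∀ t, Φ (t + T) = Φ t * Φ T)
    (hU₀ : IsUnit U₀)
    (heig : Φ T * U₀ = U₀ * exp ((T : ℂ) • M)) :
    ∀ t : ℝ, Φ (t + T) * U₀ * exp (-(((t + T) : ℂ) • M))
      = Φ t * U₀ * exp (-((t : ℂ) • M)) := by
  intro t
  have hcomm : Commute ((T : ℂ) • M) (-(((t + T) : ℂ) • M)) := by
    apply Commute.smul_left
    apply Commute.neg_right
    exact Commute.smul_right (Commute.refl M) _
  have hexp : exp ((T : ℂ) • M) * exp (-(((t + T) : ℂ) • M))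
      = exp (-((t : ℂ) • M)) := by
    rw [← Matrix.exp_add_of_commute _ _ hcomm]
    congr 1
    push_cast
    module
  calc Φ (t + T) * U₀ * exp (-(((t + T) : ℂ) • M))
      = Φ t * (Φ T * U₀) * exp (-(((t + T) : ℂ) • M)) := by
        rw [hcocycle t]; noncomm_ring
    _ = Φ t * U₀ * (exp ((T : ℂ) • M) * exp (-(((t + T) : ℂ) • M))) := by
        rw [heig]; noncomm_ring
    _ = Φ t * U₀ * exp (-((t : ℂ) • M)) := by rw [hexp]
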